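/- arXiv:0802.3763 — 2 statements merged into one kernel-verified Lean document; each statement's English description precedes it below -/
import Mathlib

section
/- Let K = ℚ(t) be the field of rational functions in one variable t over ℚ, and let W be the Weierstrass curve y² + (1−t)xy − (t+t²)y = x³ − (t+t²)x² over K. Then the discriminant of W is nonzero (so W is an elliptic curve), and the point (0,0) has additive order exactly 6 in the group W(K) of K-rational points. -/
open WeierstrassCurve

/-- The Weierstrass curve `y² + (1−t)xy − (t+t²)y = x³ − (t+t²)x²` over `K = ℚ(t)`
(the Tate normal form with `c = t`, `b = t + t²`, i.e. the surface `𝔈(Γ₁(6))`). -/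
noncomputable def Wgamma16 : WeierstrassCurve.Affine (RatFunc ℚ) :=
  { a₁ := 1 - RatFunc.X, a₂ := -(RatFunc.X + RatFunc.X ^ 2),
    a₃ := -(RatFunc.X + RatFunc.X ^ 2), a₄ := 0, a₆ := 0 }

private lemma some_congr' {F : Type*} [CommRing F] {W : WeierstrassCurve.Affine F}
    {x₁ y₁ x₂ y₂ : F} (h₁ : W.Nonsingular x₁ y₁) (h₂ : W.Nonsingular x₂ y₂)
    (hx : x₁ = x₂) (hy : y₁ = y₂) :
    WeierstrassCurve.Affine.Point.some _ _ h₁ = WeierstrassCurve.Affine.Point.some _ _ h₂ := by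
  subst hx; subst hy; rfl

private lemma ratfunc_poly_ne_zero (p : Polynomial ℚ) (hp : p ≠ 0) :
    algebraMap (Polynomial ℚ) (RatFunc ℚ) p ≠ 0 :=
  (map_ne_zero_iff _ (RatFunc.algebraMap_injective ℚ)).mpr hp

private lemma X_add_X_sq_ne_zero : (RatFunc.X + RatFunc.X ^ 2 : RatFunc ℚ) ≠ 0 := by
  have h : (RatFunc.X + RatFunc.X ^ 2 : RatFunc ℚ) =
      algebraMap (Polynomial ℚ) (RatFunc ℚ) (Polynomial.X + Polynomial.X ^ 2) := by
    simp [map_add, map_pow, RatFunc.algebraMap_X]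
  rw [h]
  apply ratfunc_poly_ne_zero
  intro hc
  have := congrArg (Polynomial.eval 1) hc
  norm_num at this

open Classical in
/-- The discriminant of `y² + (1−t)xy − (t+t²)y = x³ − (t+t²)x²` over `ℚ(t)` is nonzero, and
the point `(0,0)` has additive order exactly `6` in the group of `ℚ(t)`-rational points. -/
theorem Wgamma16_point_order_six :
    Wgamma16.Δ ≠ 0 ∧
      ∃ h : Wgamma16.Nonsingular 0 0,
        addOrderOf (WeierstrassCurve.Affine.Point.some 0 0 h) = 6 := by
  set T : RatFunc ℚ := RatFunc.X with hT
  -- the discriminant is nonzero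
  have hΔeq : Wgamma16.Δ = algebraMap (Polynomial ℚ) (RatFunc ℚ)
      (Polynomial.X ^ 6 + 12 * Polynomial.X ^ 7 + 30 * Polynomial.X ^ 8 +
        28 * Polynomial.X ^ 9 + 9 * Polynomial.X ^ 10) := by
    simp only [Wgamma16, WeierstrassCurve.Δ, WeierstrassCurve.b₂, WeierstrassCurve.b₄,
      WeierstrassCurve.b₆, WeierstrassCurve.b₈, map_add, map_mul, map_pow, map_ofNat,
      RatFunc.algebraMap_X, ← hT]
    ring
  have hΔ : Wgamma16.Δ ≠ 0 := by
    rw [hΔeq]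
    apply ratfunc_poly_ne_zero
    intro hc
    have := congrArg (Polynomial.eval 1) hc
    norm_num at this
  have hb : T + T ^ 2 ≠ 0 := X_add_X_sq_ne_zero
  -- nonsingular points
  have hP : Wgamma16.Nonsingular 0 0 := by
    refine (WeierstrassCurve.Affine.equation_iff_nonsingular_of_Δ_ne_zero (W := Wgamma16) hΔ).mp ?_
    rw [WeierstrassCurve.Affine.equation_iff]
    simp [Wgamma16]
  have hQ2 : Wgamma16.Nonsingular (T + T ^ 2) ((T + T ^ 2) * T) := by
    refine (WeierstrassCurve.Affine.equation_iff_nonsingular_of_Δ_ne_zero (W := Wgamma16) hΔ).mp ?_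
    rw [WeierstrassCurve.Affine.equation_iff]
    simp only [Wgamma16]
    ring
  have hQ3 : Wgamma16.Nonsingular T (T ^ 2) := by
    refine (WeierstrassCurve.Affine.equation_iff_nonsingular_of_Δ_ne_zero (W := Wgamma16) hΔ).mp ?_
    rw [WeierstrassCurve.Affine.equation_iff]
    simp only [Wgamma16]
    ring
  set P := WeierstrassCurve.Affine.Point.some _ _ hP with hPdef
  set Q2 := WeierstrassCurve.Affine.Point.some _ _ hQ2 with hQ2def
  set Q3 := WeierstrassCurve.Affine.Point.some _ _ hQ3 with hQ3def
  -- P + P = Q2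
  have hy0 : (0 : RatFunc ℚ) ≠ Wgamma16.negY 0 0 := by
    simp only [WeierstrassCurve.Affine.negY, Wgamma16]
    intro hc
    apply hb
    linear_combination -hc
  have hs1 : Wgamma16.slope 0 0 0 0 = 0 := by
    rw [WeierstrassCurve.Affine.slope_of_Y_ne rfl hy0]
    simp only [Wgamma16]
    rw [div_eq_zero_iff]
    left; ring
  have e2 : P + P = Q2 := by
    rw [hPdef, hQ2def, WeierstrassCurve.Affine.Point.add_of_Y_ne hy0]
    apply some_congr'
    · rw [WeierstrassCurve.Affine.addX, hs1]
      simp only [Wgamma16]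
      ring
    · rw [WeierstrassCurve.Affine.addY, WeierstrassCurve.Affine.negAddY,
        WeierstrassCurve.Affine.negY, WeierstrassCurve.Affine.addX, hs1]
      simp only [Wgamma16]
      ring
  -- Q2 + P = Q3
  have hx2 : (T + T ^ 2 : RatFunc ℚ) ≠ 0 := hb
  have hs2 : Wgamma16.slope (T + T ^ 2) 0 ((T + T ^ 2) * T) 0 = T := by
    rw [WeierstrassCurve.Affine.slope_of_X_ne hx2]
    rw [div_eq_iff (by simpa using hx2)]
    ring
  have e3 : Q2 + P = Q3 := by
    rw [hPdef, hQ2def, hQ3def, WeierstrassCurve.Affine.Point.add_of_X_ne hx2]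
    apply some_congr'
    · rw [WeierstrassCurve.Affine.addX, hs2]
      simp only [Wgamma16]
      ring
    · rw [WeierstrassCurve.Affine.addY, WeierstrassCurve.Affine.negAddY,
        WeierstrassCurve.Affine.negY, WeierstrassCurve.Affine.addX, hs2]
      simp only [Wgamma16]
      ring
  -- Q3 + Q3 = 0
  have e6 : Q3 + Q3 = 0 := by
    rw [hQ3def]
    apply WeierstrassCurve.Affine.Point.add_of_Y_eq rfl
    simp only [WeierstrassCurve.Affine.negY, Wgamma16]
    ring
  -- multiples of P
  have h2P : 2 • P = Q2 := by rw [two_nsmul, e2]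
  have h3P : 3 • P = Q3 := by
    have : (3 : ℕ) = 2 + 1 := rfl
    rw [this, add_nsmul, h2P, one_nsmul, e3]
  have h6P : 6 • P = 0 := by
    have : (6 : ℕ) = 3 + 3 := rfl
    rw [this, add_nsmul, h3P, e6]
  have hdvd : addOrderOf P ∣ 6 := addOrderOf_dvd_of_nsmul_eq_zero h6P
  have hord : addOrderOf P • P = 0 := addOrderOf_nsmul_eq_zero P
  have hpos : 0 < addOrderOf P := Nat.pos_of_dvd_of_pos hdvd (by norm_num)
  have hle : addOrderOf P ≤ 6 := Nat.le_of_dvd (by norm_num) hdvd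
  refine ⟨hΔ, hP, ?_⟩
  change addOrderOf P = 6
  interval_cases h : addOrderOf P
  · rw [one_nsmul] at hord
    exact absurd hord (WeierstrassCurve.Affine.Point.some_ne_zero hP)
  · rw [h2P] at hord
    exact absurd hord (WeierstrassCurve.Affine.Point.some_ne_zero hQ2)
  · rw [h3P] at hord
    exact absurd hord (WeierstrassCurve.Affine.Point.some_ne_zero hQ3)
  · norm_num at hdvd
  · norm_num at hdvd
  · rfl
end

section
/- Let K = ℚ(t) be the field of rational functions in one variable t over ℚ, and let W be the Weierstrass curve y² + (1−t)xy − (t+t²)y = x³ − (t+t²)x² over K. Then there exists a point of additive order exactly 2 in W(K) and a point of additive order exactly 3 in W(K); indeed 3·(0,0) has order 2 and 2·(0,0) has order 3. -/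
open WeierstrassCurve

private lemma some_eq_some {F : Type*} [Field F] {W : WeierstrassCurve.Affine F}
    {x₁ y₁ x₂ y₂ : F} (hx : x₁ = x₂) (hy : y₁ = y₂) (h₁ : W.Nonsingular x₁ y₁)
    (h₂ : W.Nonsingular x₂ y₂) :
    WeierstrassCurve.Affine.Point.some _ _ h₁ = WeierstrassCurve.Affine.Point.some _ _ h₂ := by
  subst hx; subst hy; rfl

private noncomputable abbrev t : RatFunc ℚ := RatFunc.X

private lemma ht : (t : RatFunc ℚ) ≠ 0 := RatFunc.X_ne_zero

private lemma ht1 : (1 : RatFunc ℚ) + t ≠ 0 := by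
  intro h
  have := RatFunc.algebraMap_injective ℚ
    (a₁ := (1 : Polynomial ℚ) + Polynomial.X) (a₂ := 0)
  simp only [map_add, map_one, RatFunc.algebraMap_X, map_zero] at this
  have h2 := this h
  simpa [Polynomial.coeff_one] using congrArg (Polynomial.coeff · 1) h2

private lemma hb : (t : RatFunc ℚ) + t ^ 2 ≠ 0 := by
  have : (t : RatFunc ℚ) + t ^ 2 = t * (1 + t) := by ring
  rw [this]
  exact mul_ne_zero ht ht1

private lemma hns0 : Wgamma16.Nonsingular 0 0 := by
  rw [WeierstrassCurve.Affine.nonsingular_iff, WeierstrassCurve.Affine.equation_iff]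
  refine ⟨by simp [Wgamma16], Or.inr ?_⟩
  simp only [Wgamma16, WeierstrassCurve.Affine.negY]
  intro h
  exact hb (by linear_combination -h)

private lemma hnsQ3 : Wgamma16.Nonsingular (t + t ^ 2) (t * (t + t ^ 2)) := by
  rw [WeierstrassCurve.Affine.nonsingular_iff, WeierstrassCurve.Affine.equation_iff]
  refine ⟨by simp only [Wgamma16]; ring, Or.inr ?_⟩
  simp only [Wgamma16, WeierstrassCurve.Affine.negY]
  intro h
  exact mul_ne_zero ht hb (by linear_combination h)

private lemma hnsQ3' : Wgamma16.Nonsingular (t + t ^ 2) 0 := by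
  rw [WeierstrassCurve.Affine.nonsingular_iff, WeierstrassCurve.Affine.equation_iff]
  refine ⟨by simp only [Wgamma16]; ring, Or.inr ?_⟩
  simp only [Wgamma16, WeierstrassCurve.Affine.negY]
  intro h
  exact mul_ne_zero ht hb (by linear_combination -h)

private lemma hnsQ2 : Wgamma16.Nonsingular t (t ^ 2) := by
  rw [WeierstrassCurve.Affine.nonsingular_iff, WeierstrassCurve.Affine.equation_iff]
  refine ⟨by simp only [Wgamma16]; ring, Or.inl ?_⟩
  simp only [Wgamma16]
  intro h
  exact pow_ne_zero 3 ht (by linear_combination h)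

-- negY facts
private lemma negY00 : Wgamma16.negY 0 0 = t + t ^ 2 := by
  simp [Wgamma16, WeierstrassCurve.Affine.negY]

private lemma negYQ3 : Wgamma16.negY (t + t ^ 2) (t * (t + t ^ 2)) = 0 := by
  simp only [Wgamma16, WeierstrassCurve.Affine.negY]; ring

private lemma negYQ2 : Wgamma16.negY t (t ^ 2) = t ^ 2 := by
  simp only [Wgamma16, WeierstrassCurve.Affine.negY]; ring

-- P + P = Q3
open Classical in
private lemma ePP :
    WeierstrassCurve.Affine.Point.some _ _ hns0 + WeierstrassCurve.Affine.Point.some _ _ hns0 =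
      WeierstrassCurve.Affine.Point.some _ _ hnsQ3 := by
  have hy : (0 : RatFunc ℚ) ≠ Wgamma16.negY 0 0 := by rw [negY00]; exact fun h => hb h.symm
  rw [WeierstrassCurve.Affine.Point.add_self_of_Y_ne hy]
  have hslope : Wgamma16.slope 0 0 0 0 = 0 := by
    rw [WeierstrassCurve.Affine.slope_of_Y_ne rfl hy]
    simp [Wgamma16]
  refine some_eq_some ?_ ?_ _ _
  · rw [WeierstrassCurve.Affine.addX, hslope]
    simp [Wgamma16]
  · rw [WeierstrassCurve.Affine.addY, WeierstrassCurve.Affine.negAddY,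
      WeierstrassCurve.Affine.addX, hslope]
    simp only [Wgamma16, WeierstrassCurve.Affine.negY]
    ring

-- Q3 + P = Q2
open Classical in
private lemma eQ3P :
    WeierstrassCurve.Affine.Point.some _ _ hnsQ3 + WeierstrassCurve.Affine.Point.some _ _ hns0 =
      WeierstrassCurve.Affine.Point.some _ _ hnsQ2 := by
  have hx : (t : RatFunc ℚ) + t ^ 2 ≠ 0 := hb
  rw [WeierstrassCurve.Affine.Point.add_of_X_ne hx]
  have hslope : Wgamma16.slope (t + t ^ 2) 0 (t * (t + t ^ 2)) 0 = t := by
    rw [WeierstrassCurve.Affine.slope_of_X_ne hx]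
    rw [div_eq_iff (sub_ne_zero.mpr hx)]; ring
  refine some_eq_some ?_ ?_ _ _
  · rw [WeierstrassCurve.Affine.addX, hslope]
    simp only [Wgamma16]; ring
  · rw [WeierstrassCurve.Affine.addY, WeierstrassCurve.Affine.negAddY,
      WeierstrassCurve.Affine.addX, hslope]
    simp only [Wgamma16, WeierstrassCurve.Affine.negY]
    ring

-- Q2 + Q2 = 0
open Classical in
private lemma eQ2Q2 :
    WeierstrassCurve.Affine.Point.some _ _ hnsQ2 + WeierstrassCurve.Affine.Point.some _ _ hnsQ2 = 0 :=
  WeierstrassCurve.Affine.Point.add_self_of_Y_eq negYQ2.symm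

-- Q3 + Q3 = Q3'
open Classical in
private lemma eQ3Q3 :
    WeierstrassCurve.Affine.Point.some _ _ hnsQ3 + WeierstrassCurve.Affine.Point.some _ _ hnsQ3 =
      WeierstrassCurve.Affine.Point.some _ _ hnsQ3' := by
  have hy : t * (t + t ^ 2) ≠ Wgamma16.negY (t + t ^ 2) (t * (t + t ^ 2)) := by
    rw [negYQ3]; exact mul_ne_zero ht hb
  rw [WeierstrassCurve.Affine.Point.add_self_of_Y_ne hy]
  have hslope : Wgamma16.slope (t + t ^ 2) (t + t ^ 2) (t * (t + t ^ 2)) (t * (t + t ^ 2)) =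
      2 * t := by
    rw [WeierstrassCurve.Affine.slope_of_Y_ne rfl hy, negYQ3, sub_zero]
    simp only [Wgamma16]
    rw [div_eq_iff (mul_ne_zero ht hb)]
    ring
  refine some_eq_some ?_ ?_ _ _
  · rw [WeierstrassCurve.Affine.addX, hslope]
    simp only [Wgamma16]; ring
  · rw [WeierstrassCurve.Affine.addY, WeierstrassCurve.Affine.negAddY,
      WeierstrassCurve.Affine.addX, hslope]
    simp only [Wgamma16, WeierstrassCurve.Affine.negY]
    ring

-- Q3' + Q3 = 0
open Classical in
private lemma eQ3'Q3 :
    WeierstrassCurve.Affine.Point.some _ _ hnsQ3' + WeierstrassCurve.Affine.Point.some _ _ hnsQ3 = 0 :=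
  WeierstrassCurve.Affine.Point.add_of_Y_eq rfl negYQ3.symm

open Classical in
private lemma ordQ2 : addOrderOf (WeierstrassCurve.Affine.Point.some _ _ hnsQ2) = 2 := by
  refine addOrderOf_eq_prime ?_ (WeierstrassCurve.Affine.Point.some_ne_zero _)
  rw [two_smul]; exact eQ2Q2

open Classical in
private lemma ordQ3 : addOrderOf (WeierstrassCurve.Affine.Point.some _ _ hnsQ3) = 3 := by
  refine addOrderOf_eq_prime ?_ (WeierstrassCurve.Affine.Point.some_ne_zero _)
  have : (3 : ℕ) • WeierstrassCurve.Affine.Point.some _ _ hnsQ3 =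
      (WeierstrassCurve.Affine.Point.some _ _ hnsQ3 + WeierstrassCurve.Affine.Point.some _ _ hnsQ3) +
        WeierstrassCurve.Affine.Point.some _ _ hnsQ3 := by
    rw [← two_smul ℕ, ← succ_nsmul]
  rw [this, eQ3Q3, eQ3'Q3]

open Classical in
private lemma two_smul_P :
    (2 : ℕ) • WeierstrassCurve.Affine.Point.some _ _ hns0 =
      WeierstrassCurve.Affine.Point.some _ _ hnsQ3 := by
  rw [two_smul]; exact ePP

open Classical in
private lemma three_smul_P :
    (3 : ℕ) • WeierstrassCurve.Affine.Point.some _ _ hns0 =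
      WeierstrassCurve.Affine.Point.some _ _ hnsQ2 := by
  rw [succ_nsmul, two_smul_P]; exact eQ3P

open Classical in
/-- The group of `ℚ(t)`-rational points of `y² + (1−t)xy − (t+t²)y = x³ − (t+t²)x²` contains a
point of additive order exactly `2` and a point of additive order exactly `3`; indeed
`3 • (0,0)` has order `2` and `2 • (0,0)` has order `3`. -/
theorem Wgamma16_two_and_three_torsion :
    (∃ P : Wgamma16.Point, addOrderOf P = 2) ∧
      (∃ P : Wgamma16.Point, addOrderOf P = 3) ∧
      ∃ h : Wgamma16.Nonsingular 0 0,
        addOrderOf (3 • WeierstrassCurve.Affine.Point.some 0 0 h) = 2 ∧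
        addOrderOf (2 • WeierstrassCurve.Affine.Point.some 0 0 h) = 3 := by
  refine ⟨⟨_, ordQ2⟩, ⟨_, ordQ3⟩, hns0, ?_, ?_⟩
  · rw [three_smul_P]; exact ordQ2
  · rw [two_smul_P]; exact ordQ3
end
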